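/- Let D be a commutative ring whose additive group is a free ℤ-module of finite rank, let E = D ⊗_ℤ ℚ, and let 𝔪 and 𝔫 be two distinct maximal ideals of E. Let 𝔪 ∩ D and 𝔫 ∩ D denote the preimages of 𝔪 and 𝔫 under the canonical map D → E. Then the quotient ring D/((𝔪 ∩ D) + (𝔫 ∩ D)) is finite. -/
import Mathlib


open TensorProduct

/-- Clearing denominators: every element of `ℚ ⊗[ℤ] D` has a nonzero integer
multiple in the image of `D`. -/
lemma exists_int_smul_eq_tmul {D : Type*} [CommRing D] (x : ℚ ⊗[ℤ] D) :
    ∃ (k : ℤ) (d : D), k ≠ 0 ∧ k • x = (1 : ℚ) ⊗ₜ[ℤ] d := by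
  induction x using TensorProduct.induction_on with
  | zero => exact ⟨1, 0, one_ne_zero, by simp⟩
  | tmul q d =>
    refine ⟨(q.den : ℤ), q.num • d, by exact_mod_cast q.den_nz, ?_⟩
    rw [smul_tmul', tmul_smul (q.num) ((1:ℚ)) d, smul_tmul']
    congr 1
    push_cast [zsmul_eq_mul]
    rw [mul_comm, Rat.mul_den_eq_num, mul_one]
  | add x y hx hy =>
    obtain ⟨k₁, d₁, hk₁, h₁⟩ := hx
    obtain ⟨k₂, d₂, hk₂, h₂⟩ := hy
    refine ⟨k₁ * k₂, k₂ • d₁ + k₁ • d₂, mul_ne_zero hk₁ hk₂, ?_⟩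
    have h : (1:ℚ) ⊗ₜ[ℤ] (k₂ • d₁ + k₁ • d₂) = k₂ • (k₁ • x) + k₁ • (k₂ • y) := by
      rw [tmul_add, tmul_smul, tmul_smul, h₁, h₂]
    rw [h, smul_smul, smul_smul, mul_comm k₂ k₁, smul_add]

/-- Lemma `nDlem`: if `D` is an order (a commutative ring whose additive group is
free of finite rank over `ℤ`), `E = ℚ ⊗_ℤ D`, and `𝔪 ≠ 𝔫` are maximal ideals of
`E`, then `D/((𝔪 ∩ D) + (𝔫 ∩ D))` is finite, where `𝔪 ∩ D` denotes the contraction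
of `𝔪` along the canonical map `D → E`. -/
theorem stmt_12 {D : Type*} [CommRing D] [Module.Free ℤ D] [Module.Finite ℤ D]
    (𝔪 𝔫 : Ideal (ℚ ⊗[ℤ] D)) (h𝔪 : 𝔪.IsMaximal) (h𝔫 : 𝔫.IsMaximal) (hne : 𝔪 ≠ 𝔫) :
    Finite (D ⧸
      (Ideal.comap (Algebra.TensorProduct.includeRight (R := ℤ) (A := ℚ) (B := D)).toRingHom 𝔪 ⊔
       Ideal.comap (Algebra.TensorProduct.includeRight (R := ℤ) (A := ℚ) (B := D)).toRingHom 𝔫)) := by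
  set f := (Algebra.TensorProduct.includeRight (R := ℤ) (A := ℚ) (B := D)).toRingHom with hf
  set I := Ideal.comap f 𝔪 ⊔ Ideal.comap f 𝔫 with hI
  have hfd : ∀ d : D, f d = (1 : ℚ) ⊗ₜ[ℤ] d := fun d => rfl
  -- `𝔪` and `𝔫` are comaximal
  have hsup : 𝔪 ⊔ 𝔫 = ⊤ := Ideal.IsMaximal.coprime_of_ne h𝔪 h𝔫 hne
  have h1 : (1 : ℚ ⊗[ℤ] D) ∈ 𝔪 ⊔ 𝔫 := hsup ▸ Submodule.mem_top
  obtain ⟨m, hm, n, hn, hmn⟩ := Submodule.mem_sup.mp h1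
  obtain ⟨k₁, d₁, hk₁, hd₁⟩ := exists_int_smul_eq_tmul m
  obtain ⟨k₂, d₂, hk₂, hd₂⟩ := exists_int_smul_eq_tmul n
  -- the key computation: `f ↑(k₁ * k₂) = f (k₂ • d₁ + k₁ • d₂)`
  have hcomp : f (((k₁ * k₂ : ℤ) : D)) = f (k₂ • d₁ + k₁ • d₂) := by
    rw [map_intCast, map_add, map_zsmul, map_zsmul, hfd, hfd, ← hd₁, ← hd₂,
      smul_smul, smul_smul, mul_comm k₂ k₁, ← smul_add,
      ← Int.cast_smul_eq_zsmul (ℚ ⊗[ℤ] D) (k₁ * k₂) (m + n), hmn, smul_eq_mul, mul_one]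
  -- hence the integer `k₁ * k₂` lies in the contraction sum `I`
  have hkey : ((k₁ * k₂ : ℤ) : D) ∈ I := by
    have h₀ : ((k₁ * k₂ : ℤ) : D) - (k₂ • d₁ + k₁ • d₂) ∈ Ideal.comap f 𝔪 := by
      have : f (((k₁ * k₂ : ℤ) : D) - (k₂ • d₁ + k₁ • d₂)) = 0 := by
        rw [map_sub, hcomp, sub_self]
      exact Ideal.mem_comap.mpr (this ▸ 𝔪.zero_mem)
    have h₁' : k₂ • d₁ ∈ Ideal.comap f 𝔪 := by
      have : f (k₂ • d₁) = (k₂ * k₁) • m := by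
        rw [map_zsmul, hfd, ← hd₁, smul_smul]
      exact Ideal.mem_comap.mpr (this ▸ zsmul_mem hm (k₂ * k₁))
    have h₂' : k₁ • d₂ ∈ Ideal.comap f 𝔫 := by
      have : f (k₁ • d₂) = (k₁ * k₂) • n := by
        rw [map_zsmul, hfd, ← hd₂, smul_smul]
      exact Ideal.mem_comap.mpr (this ▸ zsmul_mem hn (k₁ * k₂))
    have : ((k₁ * k₂ : ℤ) : D) =
        (((k₁ * k₂ : ℤ) : D) - (k₂ • d₁ + k₁ • d₂)) + k₂ • d₁ + k₁ • d₂ := by ring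
    rw [this]
    exact add_mem (add_mem (Ideal.mem_sup_left h₀) (Ideal.mem_sup_left h₁'))
      (Ideal.mem_sup_right h₂')
  -- `D ⧸ I` is a finitely generated torsion `ℤ`-module, hence finite
  have hfin : Module.Finite ℤ (D ⧸ I) :=
    Module.Finite.of_surjective ((Ideal.Quotient.mk I).toIntAlgHom.toLinearMap)
      Ideal.Quotient.mk_surjective
  refine Module.finite_of_fg_torsion (D ⧸ I) (fun x => ?_)
  obtain ⟨d, rfl⟩ := Ideal.Quotient.mk_surjective x
  refine ⟨⟨k₁ * k₂, mem_nonZeroDivisors_of_ne_zero (mul_ne_zero hk₁ hk₂)⟩, ?_⟩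
  show (k₁ * k₂ : ℤ) • Ideal.Quotient.mk I d = 0
  rw [← map_zsmul, zsmul_eq_mul, Ideal.Quotient.eq_zero_iff_mem]
  exact I.mul_mem_right d hkey
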